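/- A (d-1)-dimensional simplicial complex K is sequentially (S_r) over a field k if and only if for all 0 ≤ m ≤ d - 1, all faces σ of K^⟨m⟩, and all j < min{m - dim σ - 1, r - 1}, one has H̃_j(link(σ; K^⟨m⟩); k) = 0. -/

import Mathlib

noncomputable section

/-! ## Singular homology machinery -/

namespace SimplexCategory

/-- The old Mathlib `SimplexCategory.toTopObj` (removed upstream), restored verbatim in meaning. -/
def toTopObj (x : SimplexCategory) : Set (Fin (x.len + 1) → NNReal) :=
  { f | ∑ i, f i = 1 }

/-- The old Mathlib `SimplexCategory.toTopMap` (removed upstream). -/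
def toTopMap {x y : SimplexCategory} (f : x ⟶ y) (g : x.toTopObj) : y.toTopObj :=
  ⟨fun i => ∑ j ∈ Finset.univ.filter (f.toOrderHom · = i), (g : Fin (x.len + 1) → NNReal) j, by
    change ∑ i, ∑ j ∈ Finset.univ.filter (f.toOrderHom · = i), (g : Fin (x.len + 1) → NNReal) j = 1
    rw [Finset.sum_fiberwise]
    exact g.2⟩

theorem continuous_toTopMap {x y : SimplexCategory} (f : x ⟶ y) : Continuous (toTopMap f) := by
  refine Continuous.subtype_mk (continuous_pi fun i => ?_) _
  exact continuous_finset_sum _ (fun j _ => (continuous_apply _).comp continuous_subtype_val)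

end SimplexCategory

/-- The topological standard `n`-simplex. -/
abbrev TopSimplex (n : ℕ) : Type := (SimplexCategory.mk n).toTopObj

/-- The `i`-th face inclusion of topological simplices, as a continuous map. -/
def faceIncl {n : ℕ} (i : Fin (n + 2)) : C(TopSimplex n, TopSimplex (n + 1)) :=
  ⟨SimplexCategory.toTopMap (SimplexCategory.δ i), SimplexCategory.continuous_toTopMap _⟩

/-- Singular `n`-chains of `X` with coefficients in `k`:
the free `k`-module on continuous maps from the standard `n`-simplex. -/
abbrev SChain (k : Type) [Field k] (X : Type*) [TopologicalSpace X] (n : ℕ) :=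
  C(TopSimplex n, X) →₀ k

variable (k : Type) [Field k]

/-- The singular boundary map `C_{n+1}(X) → C_n(X)`. -/
def sBoundary (X : Type*) [TopologicalSpace X] (n : ℕ) :
    SChain k X (n + 1) →ₗ[k] SChain k X n :=
  Finsupp.lsum k fun σ => ∑ i : Fin (n + 2),
    ((-1 : k) ^ (i : ℕ)) • Finsupp.lsingle (σ.comp (faceIncl i))

/-- The chain map induced by a continuous map. -/
def chainMap {A X : Type*} [TopologicalSpace A] [TopologicalSpace X] (f : C(A, X)) (n : ℕ) :
    SChain k A n →ₗ[k] SChain k X n :=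
  Finsupp.lmapDomain k k fun σ => f.comp σ

lemma chainMap_comm {A X : Type*} [TopologicalSpace A] [TopologicalSpace X] (f : C(A, X))
    (n : ℕ) :
    (sBoundary k X n).comp (chainMap k f (n + 1)) = (chainMap k f n).comp (sBoundary k A n) := by
  apply Finsupp.lhom_ext
  intro σ b
  simp only [LinearMap.coe_comp, Function.comp_apply, chainMap, Finsupp.lmapDomain_apply,
    Finsupp.mapDomain_single, sBoundary, Finsupp.lsum_single, LinearMap.coe_sum,
    Finset.sum_apply, LinearMap.smul_apply, Finsupp.lsingle_apply, map_sum,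
    Finsupp.mapDomain_smul, ContinuousMap.comp_assoc]

/-- Chains of `X` supported on a subspace `A ⊆ X`
(the image of the chains of `A` under the inclusion). -/
def subChains (X : Type*) [TopologicalSpace X] (A : Set X) (n : ℕ) :
    Submodule k (SChain k X n) :=
  LinearMap.range (chainMap k ⟨(Subtype.val : A → X), continuous_subtype_val⟩ n)

/-- Relative singular `n`-chains of the pair `(X, A)`. -/
abbrev RelChain (X : Type*) [TopologicalSpace X] (A : Set X) (n : ℕ) :=
  SChain k X n ⧸ subChains k X A n

lemma subChains_le (X : Type*) [TopologicalSpace X] (A : Set X) (n : ℕ) :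
    subChains k X A (n + 1) ≤ (subChains k X A n).comap (sBoundary k X n) := by
  rintro x ⟨y, rfl⟩
  exact ⟨sBoundary k A n y, (LinearMap.congr_fun (chainMap_comm k _ n) y).symm⟩

/-- The boundary map on relative singular chains. -/
def relBoundary (X : Type*) [TopologicalSpace X] (A : Set X) (n : ℕ) :
    RelChain k X A (n + 1) →ₗ[k] RelChain k X A n :=
  Submodule.mapQ _ _ (sBoundary k X n) (subChains_le k X A n)

/-- Relative singular cycles. -/
def relCycles (X : Type*) [TopologicalSpace X] (A : Set X) :
    (n : ℕ) → Submodule k (RelChain k X A n)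
  | 0 => ⊤
  | n + 1 => LinearMap.ker (relBoundary k X A n)

/-- Relative singular homology `H_n(X, A; k)`: cycles modulo boundaries. -/
def RelHomology (X : Type*) [TopologicalSpace X] (A : Set X) (n : ℕ) : Type _ :=
  ↥((relCycles k X A n).map (LinearMap.range (relBoundary k X A n)).mkQ)

/-- Local homology `H_n(X, X - p; k)`. -/
def LocalHomology (X : Type*) [TopologicalSpace X] (p : X) (n : ℕ) : Type _ :=
  RelHomology k X ({p}ᶜ) n

/-- Local homology with integer index (trivial in negative degrees). -/
def LocalHomologyZ (X : Type*) [TopologicalSpace X] (p : X) : ℤ → Type _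
  | .ofNat n => LocalHomology k X p n
  | .negSucc _ => PUnit

instance (X : Type*) [TopologicalSpace X] (p : X) (n : ℕ) :
    AddCommGroup (LocalHomology k X p n) := by
  unfold LocalHomology RelHomology; infer_instance

instance (X : Type*) [TopologicalSpace X] (p : X) (n : ℕ) :
    Module k (LocalHomology k X p n) := by
  unfold LocalHomology RelHomology; infer_instance

instance (X : Type*) [TopologicalSpace X] (p : X) (j : ℤ) :
    AddCommGroup (LocalHomologyZ k X p j) := by
  unfold LocalHomologyZ; cases j <;> infer_instance

instance (X : Type*) [TopologicalSpace X] (p : X) (j : ℤ) :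
    Module k (LocalHomologyZ k X p j) := by
  unfold LocalHomologyZ; cases j <;> infer_instance

/-- The augmentation map on singular `0`-chains. -/
def sAugment (X : Type*) [TopologicalSpace X] : SChain k X 0 →ₗ[k] k :=
  Finsupp.lsum k fun _ => LinearMap.id

/-- Reduced singular cycles (using the augmented chain complex). -/
def redCycles (X : Type*) [TopologicalSpace X] : (n : ℕ) → Submodule k (SChain k X n)
  | 0 => LinearMap.ker (sAugment k X)
  | n + 1 => LinearMap.ker (sBoundary k X n)

/-- Reduced singular homology `H̃_n(X; k)`. -/
def RedHomology (X : Type*) [TopologicalSpace X] (n : ℕ) : Type _ :=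
  ↥((redCycles k X n).map (LinearMap.range (sBoundary k X n)).mkQ)

/-! ## Abstract simplicial complexes and their geometric realization -/

/-- A (possibly empty) abstract simplicial complex on the vertex set `V`,
whose faces include the empty set whenever there is any face. -/
structure ASC (V : Type) where
  faces : Set (Finset V)
  down_closed : ∀ {s t : Finset V}, s ∈ faces → t ⊆ s → t ∈ faces

/-- The dimension of a face: its cardinality minus one. -/
def dimF {V : Type} (s : Finset V) : ℤ := (s.card : ℤ) - 1

namespace ASC

variable {V : Type}

/-- The link of a face `σ`. -/
def link [DecidableEq V] (K : ASC V) (σ : Finset V) : ASC V where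
  faces := {τ | τ ∩ σ = ∅ ∧ τ ∪ σ ∈ K.faces}
  down_closed := by
    rintro s t ⟨hd, hu⟩ hts
    refine ⟨Finset.subset_empty.mp ?_, K.down_closed hu (Finset.union_subset_union hts Finset.Subset.rfl)⟩
    rw [← hd]
    exact Finset.inter_subset_inter hts Finset.Subset.rfl

/-- A facet: an inclusion-maximal face. -/
def IsFacet (K : ASC V) (s : Finset V) : Prop :=
  s ∈ K.faces ∧ ∀ t ∈ K.faces, s ⊆ t → s = t

/-- The subcomplex of `K` generated by a given family of faces of `K`. -/
def gen (K : ASC V) (F : Set (Finset V)) : ASC V where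
  faces := {t | ∃ s ∈ F ∩ K.faces, t ⊆ s}
  down_closed := by rintro s t ⟨u, hu, hsu⟩ hts; exact ⟨u, hu, hts.trans hsu⟩

/-- `K^⟨m⟩`: the subcomplex generated by all facets of dimension at least `m`. -/
def aboveSkel (K : ASC V) (m : ℤ) : ASC V :=
  K.gen {s | K.IsFacet s ∧ m ≤ dimF s}

/-- `K^[m]`: the pure `m`-skeleton, generated by all `m`-dimensional faces. -/
def pureSkel (K : ASC V) (m : ℤ) : ASC V :=
  K.gen {s | dimF s = m}

/-- The `m`-skeleton: all faces of dimension at most `m`. -/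
def skel (K : ASC V) (m : ℤ) : ASC V where
  faces := {s | s ∈ K.faces ∧ dimF s ≤ m}
  down_closed := by
    rintro s t ⟨hs, hds⟩ hts
    refine ⟨K.down_closed hs hts, le_trans ?_ hds⟩
    simp only [dimF, sub_le_sub_iff_right, Nat.cast_le]
    exact Finset.card_le_card hts

/-- `K` has dimension `n`. -/
def hasDim (K : ASC V) (n : ℤ) : Prop :=
  (∃ s ∈ K.faces, dimF s = n) ∧ ∀ s ∈ K.faces, dimF s ≤ n

/-- The geometric realization of `K`, as a subset of `V → ℝ`. -/
def realizSet (K : ASC V) [Fintype V] : Set (V → ℝ) :=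
  {f | (∀ v, 0 ≤ f v) ∧ (∑ v, f v) = 1 ∧ ∃ s ∈ K.faces, ∀ v, f v ≠ 0 → v ∈ s}

/-- The geometric realization of `K`, as a topological space. -/
abbrev space (K : ASC V) [Fintype V] : Type _ := ↥(K.realizSet)

/-- The set of points of `|K|` lying in the realization of a subcomplex `L`. -/
def subSpace (K : ASC V) [Fintype V] (L : ASC V) : Set K.space :=
  {p | ∃ s ∈ L.faces, ∀ v, (p : V → ℝ) v ≠ 0 → v ∈ s}

/-- `p` lies in the (relative) interior of the face `σ`, i.e. the support of `p` is
exactly `σ`. -/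
def inInterior (K : ASC V) [Fintype V] (σ : Finset V) (p : K.space) : Prop :=
  ∀ v, (p : V → ℝ) v ≠ 0 ↔ v ∈ σ

end ASC

/-! ## Simplicial homology -/

/-- The `n`-dimensional faces of `K` (faces of cardinality `n+1`). -/
def FacesDim {V : Type} (K : ASC V) (n : ℕ) : Type _ :=
  {s : Finset V // s ∈ K.faces ∧ s.card = n + 1}

/-- Simplicial `n`-chains. -/
abbrev SimpChain {V : Type} (K : ASC V) (n : ℕ) : Type _ := FacesDim K n →₀ k

/-- The `i`-th vertex of a face of cardinality `n` (in the vertex order). -/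
def faceVertex {V : Type} [LinearOrder V] {n : ℕ} (s : Finset V) (hs : s.card = n)
    (i : Fin n) : V :=
  (s.sort (· ≤ ·))[(i : ℕ)]'(by rw [Finset.length_sort, hs]; exact i.isLt)

lemma faceVertex_mem {V : Type} [LinearOrder V] {n : ℕ} (s : Finset V) (hs : s.card = n)
    (i : Fin n) : faceVertex s hs i ∈ s :=
  (Finset.mem_sort _).mp (List.getElem_mem _)

/-- The simplicial boundary map. -/
def simpBoundary {V : Type} [LinearOrder V] (K : ASC V) (n : ℕ) :
    SimpChain k K (n + 1) →ₗ[k] SimpChain k K n :=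
  Finsupp.lsum k fun s => ∑ i : Fin (n + 2),
    ((-1 : k) ^ (i : ℕ)) • Finsupp.lsingle
      ⟨s.1.erase (faceVertex s.1 s.2.2 i),
        K.down_closed s.2.1 (Finset.erase_subset _ _), by
          rw [Finset.card_erase_of_mem (faceVertex_mem s.1 s.2.2 i), s.2.2]; omega⟩

/-- The simplicial augmentation map. -/
def simpAugment {V : Type} (K : ASC V) : SimpChain k K 0 →ₗ[k] k :=
  Finsupp.lsum k fun _ => LinearMap.id

/-- Reduced simplicial cycles (augmented chain complex). -/
def simpRedCycles {V : Type} [LinearOrder V] (K : ASC V) :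
    (n : ℕ) → Submodule k (SimpChain k K n)
  | 0 => (LinearMap.ker (simpAugment k K) : Submodule k (SimpChain k K 0))
  | n + 1 => LinearMap.ker (simpBoundary k K n)

/-- Reduced simplicial homology `H̃_n(K; k)` in degree `n : ℕ`. -/
def SimpRedHomology {V : Type} [LinearOrder V] (K : ASC V) (n : ℕ) : Type _ :=
  ↥((simpRedCycles k K n).map (LinearMap.range (simpBoundary k K n)).mkQ)

instance {V : Type} [LinearOrder V] (K : ASC V) (n : ℕ) :
    AddCommGroup (SimpRedHomology k K n) := by unfold SimpRedHomology; infer_instance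

instance {V : Type} [LinearOrder V] (K : ASC V) (n : ℕ) :
    Module k (SimpRedHomology k K n) := by unfold SimpRedHomology; infer_instance

/-- The cokernel of the simplicial augmentation: reduced homology in degree `-1`. -/
def augCoker {V : Type} (K : ASC V) : Type _ :=
  k ⧸ LinearMap.range (simpAugment k K)

instance {V : Type} (K : ASC V) : AddCommGroup (augCoker k K) := by
  unfold augCoker; infer_instance

instance {V : Type} (K : ASC V) : Module k (augCoker k K) := by
  unfold augCoker; infer_instance

/-- Reduced simplicial homology with integer index: in degree `-1` it is the cokernel of the
augmentation, and it is trivial in degrees below `-1`. -/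
def SimpRedHomologyZ {V : Type} [LinearOrder V] (K : ASC V) : ℤ → Type _
  | .ofNat n => SimpRedHomology k K n
  | .negSucc 0 => augCoker k K
  | .negSucc (_ + 1) => PUnit

instance {V : Type} [LinearOrder V] (K : ASC V) (j : ℤ) :
    AddCommGroup (SimpRedHomologyZ k K j) := by
  unfold SimpRedHomologyZ
  match j with
  | .ofNat n => infer_instance
  | .negSucc 0 => infer_instance
  | .negSucc (_ + 1) => infer_instance

instance {V : Type} [LinearOrder V] (K : ASC V) (j : ℤ) :
    Module k (SimpRedHomologyZ k K j) := by
  unfold SimpRedHomologyZ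
  match j with
  | .ofNat n => infer_instance
  | .negSucc 0 => infer_instance
  | .negSucc (_ + 1) => infer_instance

/-! ## Serre conditions -/

/-- Serre's condition `(S_r)` over `k` for a `(d-1)`-dimensional complex `K`. -/
def IsSerre {V : Type} [LinearOrder V] (K : ASC V) (d r : ℕ) : Prop :=
  ∀ σ ∈ K.faces, ∀ i : ℕ,
    (i : ℤ) < min ((r : ℤ) - 1) ((d : ℤ) - dimF σ - 2) →
      Subsingleton (SimpRedHomology k (K.link σ) i)

/-- Sequentially `(S_r)`: every pure `m`-skeleton (an `m`-dimensional complex) is `(S_r)`. -/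
def SeqSerre {V : Type} [LinearOrder V] (K : ASC V) (r : ℕ) : Prop :=
  ∀ m : ℕ, IsSerre k (K.pureSkel (m : ℤ)) (m + 1) r

/-! ## Topological notions -/

/-- The open unit ball in `ℝ^n`. -/
def openBall (n : ℕ) : Set (EuclideanSpace ℝ (Fin n)) := Metric.ball 0 1

/-- `p` has a neighborhood homeomorphic to an open `j`-dimensional ball. -/
def HasBallNbhd {X : Type*} [TopologicalSpace X] (p : X) (j : ℕ) : Prop :=
  ∃ U ∈ nhds p, Nonempty (↥U ≃ₜ ↥(openBall j))

/-- `D_j(X; k)`: the points with nonvanishing `j`-th local homology. -/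
def Dset (X : Type*) [TopologicalSpace X] (j : ℕ) : Set X :=
  {p | Nontrivial (LocalHomology k X p j)}

/-- `X^⟨m⟩`: the closure of the union of the `D_j(X; k)` for `j ≥ m`. -/
def aboveSet (X : Type*) [TopologicalSpace X] (m : ℕ) : Set X :=
  closure (⋃ j : ℕ, ⋃ _ : m ≤ j, Dset k X j)

/-- The dimension of a subset `S` of a space is at most `ℓ`: `S` contains no open ball of
dimension greater than `ℓ`.  (The empty set has negative dimension.) -/
def SetDimLE {X : Type*} [TopologicalSpace X] (S : Set X) (ℓ : ℤ) : Prop :=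
  ∀ n : ℕ, (∃ B : Set X, B ⊆ S ∧ Nonempty (↥B ≃ₜ ↥(openBall n))) → (n : ℤ) ≤ ℓ


section Aux
variable {V : Type} [LinearOrder V]

/-- Equivalence of faces of a fixed dimension between complexes agreeing in that cardinality. -/
def fEquiv (K₁ K₂ : ASC V) (q : ℕ)
    (h : ∀ s : Finset V, s.card = q + 1 → (s ∈ K₁.faces ↔ s ∈ K₂.faces)) :
    FacesDim K₁ q ≃ FacesDim K₂ q where
  toFun s := ⟨s.1, (h s.1 s.2.2).mp s.2.1, s.2.2⟩
  invFun s := ⟨s.1, (h s.1 s.2.2).mpr s.2.1, s.2.2⟩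
  left_inv s := rfl
  right_inv s := rfl

def cEquiv (K₁ K₂ : ASC V) (q : ℕ)
    (h : ∀ s : Finset V, s.card = q + 1 → (s ∈ K₁.faces ↔ s ∈ K₂.faces)) :
    SimpChain k K₁ q ≃ₗ[k] SimpChain k K₂ q :=
  Finsupp.domLCongr (fEquiv K₁ K₂ q h)

lemma bComm (K₁ K₂ : ASC V) (q : ℕ)
    (h1 : ∀ s : Finset V, s.card = q + 1 → (s ∈ K₁.faces ↔ s ∈ K₂.faces))
    (h2 : ∀ s : Finset V, s.card = q + 2 → (s ∈ K₁.faces ↔ s ∈ K₂.faces))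
    (x : SimpChain k K₁ (q + 1)) :
    cEquiv k K₁ K₂ q h1 (simpBoundary k K₁ q x) =
      simpBoundary k K₂ q (cEquiv k K₁ K₂ (q + 1) h2 x) := by
  have : ((cEquiv k K₁ K₂ q h1 : SimpChain k K₁ q ≃ₗ[k] SimpChain k K₂ q) :
      SimpChain k K₁ q →ₗ[k] SimpChain k K₂ q).comp (simpBoundary k K₁ q)
      = (simpBoundary k K₂ q).comp
        ((cEquiv k K₁ K₂ (q+1) h2 : SimpChain k K₁ (q+1) ≃ₗ[k] SimpChain k K₂ (q+1)) :
          SimpChain k K₁ (q+1) →ₗ[k] SimpChain k K₂ (q+1)) := by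
    apply Finsupp.lhom_ext
    intro a b
    simp only [LinearMap.coe_comp, Function.comp_apply, LinearEquiv.coe_coe, cEquiv,
      Finsupp.domLCongr_single, simpBoundary, Finsupp.lsum_single, LinearMap.coe_sum,
      Finset.sum_apply, LinearMap.smul_apply, Finsupp.lsingle_apply, map_sum, map_smul,
      Finsupp.domLCongr_single]
    apply Finset.sum_congr rfl
    intro i _
    congr 1
    exact (Finsupp.domLCongr_single (fEquiv K₁ K₂ q h1) _ b).trans rfl
  exact LinearMap.congr_fun this x

lemma aComm (K₁ K₂ : ASC V)
    (h : ∀ s : Finset V, s.card = 1 → (s ∈ K₁.faces ↔ s ∈ K₂.faces))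
    (x : SimpChain k K₁ 0) :
    simpAugment k K₂ (cEquiv k K₁ K₂ 0 h x) = simpAugment k K₁ x := by
  have : (simpAugment k K₂).comp
      ((cEquiv k K₁ K₂ 0 h : SimpChain k K₁ 0 ≃ₗ[k] SimpChain k K₂ 0) :
        SimpChain k K₁ 0 →ₗ[k] SimpChain k K₂ 0) = simpAugment k K₁ := by
    apply Finsupp.lhom_ext
    intro a b
    simp [cEquiv, simpAugment]
  exact LinearMap.congr_fun this x

lemma subsingleton_hom_iff (K : ASC V) (n : ℕ) :
    Subsingleton (SimpRedHomology k K n) ↔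
      ∀ x ∈ simpRedCycles k K n, x ∈ LinearMap.range (simpBoundary k K n) := by
  unfold SimpRedHomology
  constructor
  · intro hs x hx
    have h1 : (⟨(LinearMap.range (simpBoundary k K n)).mkQ x,
        Submodule.mem_map_of_mem hx⟩ :
        ↥((simpRedCycles k K n).map (LinearMap.range (simpBoundary k K n)).mkQ))
        = ⟨0, Submodule.zero_mem _⟩ := Subsingleton.elim _ _
    have h2 : (LinearMap.range (simpBoundary k K n)).mkQ x = 0 := congrArg Subtype.val h1
    rwa [Submodule.mkQ_apply, Submodule.Quotient.mk_eq_zero] at h2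
  · intro h
    constructor
    rintro ⟨a, ha⟩ ⟨b, hb⟩
    obtain ⟨x, hx, rfl⟩ := ha
    obtain ⟨y, hy, rfl⟩ := hb
    refine Subtype.ext ?_
    show (LinearMap.range (simpBoundary k K n)).mkQ x =
      (LinearMap.range (simpBoundary k K n)).mkQ y
    rw [Submodule.mkQ_apply, Submodule.mkQ_apply]
    exact (Submodule.Quotient.eq _).mpr (h (x - y) (sub_mem hx hy))

lemma homology_transfer_mp (K₁ K₂ : ASC V) (n : ℕ)
    (h : ∀ s : Finset V, s.card ≤ n + 2 → (s ∈ K₁.faces ↔ s ∈ K₂.faces)) :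
    Subsingleton (SimpRedHomology k K₁ n) → Subsingleton (SimpRedHomology k K₂ n) := by
  have hn1 : ∀ s : Finset V, s.card = n + 1 → (s ∈ K₁.faces ↔ s ∈ K₂.faces) :=
    fun s hs => h s (by omega)
  have hn2 : ∀ s : Finset V, s.card = n + 2 → (s ∈ K₁.faces ↔ s ∈ K₂.faces) :=
    fun s hs => h s (by omega)
  rw [subsingleton_hom_iff, subsingleton_hom_iff]
  intro H1 y hy
  have hx : (cEquiv k K₁ K₂ n hn1).symm y ∈ simpRedCycles k K₁ n := by
    cases n with
    | zero =>
      rw [show simpRedCycles k K₁ 0 = LinearMap.ker (simpAugment k K₁) from rfl,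
        LinearMap.mem_ker]
      have hc := aComm k K₁ K₂ hn1 ((cEquiv k K₁ K₂ 0 hn1).symm y)
      rw [LinearEquiv.apply_symm_apply] at hc
      rw [← hc]
      exact LinearMap.mem_ker.mp hy
    | succ n' =>
      rw [show simpRedCycles k K₁ (n'+1) = LinearMap.ker (simpBoundary k K₁ n') from rfl,
        LinearMap.mem_ker]
      have hn0 : ∀ s : Finset V, s.card = n' + 1 → (s ∈ K₁.faces ↔ s ∈ K₂.faces) :=
        fun s hs => h s (by omega)
      have hc := bComm k K₁ K₂ n' hn0 hn1 ((cEquiv k K₁ K₂ (n'+1) hn1).symm y)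
      rw [LinearEquiv.apply_symm_apply] at hc
      have hy0 : simpBoundary k K₂ n' y = 0 := LinearMap.mem_ker.mp hy
      rw [hy0] at hc
      exact (LinearEquiv.map_eq_zero_iff _).mp hc
  obtain ⟨z, hz⟩ := H1 ((cEquiv k K₁ K₂ n hn1).symm y) hx
  refine ⟨cEquiv k K₁ K₂ (n+1) hn2 z, ?_⟩
  have hc := bComm k K₁ K₂ n hn1 hn2 z
  rw [hz, LinearEquiv.apply_symm_apply] at hc
  exact hc.symm

lemma homology_transfer (K₁ K₂ : ASC V) (n : ℕ)
    (h : ∀ s : Finset V, s.card ≤ n + 2 → (s ∈ K₁.faces ↔ s ∈ K₂.faces)) :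
    Subsingleton (SimpRedHomology k K₁ n) ↔ Subsingleton (SimpRedHomology k K₂ n) :=
  ⟨homology_transfer_mp k K₁ K₂ n h,
    homology_transfer_mp k K₂ K₁ n (fun s hs => (h s hs).symm)⟩

end Aux
section Aux2
variable {V : Type} [LinearOrder V]

lemma exists_facet (K : ASC V) (d : ℕ)
    (hd : ∀ s ∈ K.faces, dimF s ≤ (d : ℤ) - 1) :
    ∀ s ∈ K.faces, ∃ F, K.IsFacet F ∧ s ⊆ F := by
  have key : ∀ c : ℕ, ∀ s ∈ K.faces, d ≤ s.card + c → ∃ F, K.IsFacet F ∧ s ⊆ F := by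
    intro c
    induction c with
    | zero =>
      intro s hs hc
      refine ⟨s, ⟨hs, fun t ht hst => ?_⟩, Finset.Subset.refl s⟩
      have h1 := hd t ht
      have h2 : t.card ≤ d := by unfold dimF at h1; omega
      exact Finset.eq_of_subset_of_card_le hst (by omega)
    | succ c ih =>
      intro s hs hc
      by_cases hf : ∀ t ∈ K.faces, s ⊆ t → s = t
      · exact ⟨s, ⟨hs, hf⟩, Finset.Subset.refl s⟩
      · push_neg at hf
        obtain ⟨t, ht, hst, hne⟩ := hf
        have hcard : s.card < t.card := Finset.card_lt_card (hst.ssubset_of_ne hne)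
        obtain ⟨F, hF, htF⟩ := ih t ht (by omega)
        exact ⟨F, hF, hst.trans htF⟩
  intro s hs
  exact key d s hs (by omega)

lemma skel_faces_eq (K : ASC V) (d : ℕ)
    (hd : ∀ s ∈ K.faces, dimF s ≤ (d : ℤ) - 1) (m : ℕ) (s : Finset V)
    (hs : s.card ≤ m + 1) :
    s ∈ (K.pureSkel (m : ℤ)).faces ↔ s ∈ (K.aboveSkel (m : ℤ)).faces := by
  constructor
  · rintro ⟨F, ⟨hFdim, hFmem⟩, hsF⟩
    obtain ⟨G, hG, hFG⟩ := exists_facet K d hd F hFmem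
    refine ⟨G, ⟨⟨hG, ?_⟩, hG.1⟩, hsF.trans hFG⟩
    have hcard : F.card ≤ G.card := Finset.card_le_card hFG
    simp only [Set.mem_setOf_eq] at hFdim
    unfold dimF at hFdim ⊢; omega
  · rintro ⟨G, ⟨⟨hGfacet, hGdim⟩, hGmem⟩, hsG⟩
    have hGcard : m + 1 ≤ G.card := by unfold dimF at hGdim; omega
    obtain ⟨F, hsF, hFG, hFcard⟩ := Finset.exists_subsuperset_card_eq hsG hs hGcard
    refine ⟨F, ⟨?_, K.down_closed hGmem hFG⟩, hsF⟩
    simp only [Set.mem_setOf_eq]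
    unfold dimF; omega

lemma link_faces_eq (K : ASC V) (d : ℕ)
    (hd : ∀ s ∈ K.faces, dimF s ≤ (d : ℤ) - 1) (m : ℕ) (σ : Finset V) (c : ℕ)
    (hc : c + σ.card ≤ m + 1) :
    ∀ τ : Finset V, τ.card ≤ c →
      (τ ∈ ((K.pureSkel (m : ℤ)).link σ).faces ↔ τ ∈ ((K.aboveSkel (m : ℤ)).link σ).faces) := by
  intro τ hτ
  show (τ ∩ σ = ∅ ∧ τ ∪ σ ∈ (K.pureSkel (m : ℤ)).faces) ↔
    (τ ∩ σ = ∅ ∧ τ ∪ σ ∈ (K.aboveSkel (m : ℤ)).faces)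
  refine and_congr_right fun _ => ?_
  apply skel_faces_eq K d hd m
  have hcu : (τ ∪ σ).card ≤ τ.card + σ.card := Finset.card_union_le τ σ
  omega

end Aux2

theorem serre_stmt_13 (k : Type) [Field k] (V : Type) [LinearOrder V] (K : ASC V)
    (d r : ℕ) (hd : K.hasDim ((d : ℤ) - 1)) :
    SeqSerre k K r ↔
      ∀ m : ℕ, (m : ℤ) ≤ (d : ℤ) - 1 → ∀ σ ∈ (K.aboveSkel (m : ℤ)).faces, ∀ j : ℕ,
        (j : ℤ) < min ((m : ℤ) - dimF σ - 1) ((r : ℤ) - 1) →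
          Subsingleton (SimpRedHomology k ((K.aboveSkel (m : ℤ)).link σ) j) := by
  obtain ⟨-, hd2⟩ := hd
  constructor
  · intro hseq m _ σ hσ j hj
    have hj1 : (j : ℤ) < (m : ℤ) - dimF σ - 1 := lt_of_lt_of_le hj (min_le_left _ _)
    have hj2 : (j : ℤ) < (r : ℤ) - 1 := lt_of_lt_of_le hj (min_le_right _ _)
    have hj0 : (0 : ℤ) ≤ (j : ℤ) := Int.natCast_nonneg j
    have hjm : (j : ℤ) + (σ.card : ℤ) + 1 ≤ (m : ℤ) := by unfold dimF at hj1; omega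
    have hjm' : j + σ.card + 1 ≤ m := by exact_mod_cast hjm
    have hσcard : σ.card ≤ m + 1 := by omega
    have hσ' : σ ∈ (K.pureSkel (m : ℤ)).faces := (skel_faces_eq K d hd2 m σ hσcard).mpr hσ
    have hS := hseq m σ hσ' j (by
      refine lt_min hj2 ?_
      push_cast
      omega)
    exact (homology_transfer k _ _ j (link_faces_eq K d hd2 m σ (j + 2) (by omega))).mp hS
  · intro hrhs m σ hσ i hi
    obtain ⟨F, ⟨hFdim, hFmem⟩, hσF⟩ := hσ
    simp only [Set.mem_setOf_eq] at hFdim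
    have hm : (m : ℤ) ≤ (d : ℤ) - 1 := by have := hd2 F hFmem; omega
    have hi1 : (i : ℤ) < (r : ℤ) - 1 := lt_of_lt_of_le hi (min_le_left _ _)
    have hi2 : (i : ℤ) < (m : ℤ) - dimF σ - 1 := by
      have := lt_of_lt_of_le hi (min_le_right _ _)
      push_cast at this
      omega
    have hi0 : (0 : ℤ) ≤ (i : ℤ) := Int.natCast_nonneg i
    have him : (i : ℤ) + (σ.card : ℤ) + 1 ≤ (m : ℤ) := by unfold dimF at hi2; omega
    have him' : i + σ.card + 1 ≤ m := by exact_mod_cast him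
    have hσcard : σ.card ≤ m + 1 := by omega
    have hσ' : σ ∈ (K.aboveSkel (m : ℤ)).faces :=
      (skel_faces_eq K d hd2 m σ hσcard).mp ⟨F, ⟨hFdim, hFmem⟩, hσF⟩
    have hS := hrhs m hm σ hσ' i (lt_min hi2 hi1)
    exact (homology_transfer k _ _ i (link_faces_eq K d hd2 m σ (i + 2) (by omega))).mpr hS

end
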